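/- Let G be a random matrix with values in ℂ^{N_R×N_T}, let η ∈ [0,1), let c ∈ ℝ and ε > 0, and suppose that inf_{Q ∈ Q_P} ℙ[f(G,Q) < c − ε] < η. Then there exist a real number μ with 1 ≤ μ ≤ 2 and a positive definite (hence non-singular) matrix Q̂ ∈ Q_P such that ℙ[f(G,Q̂) < c − με] ≤ η. -/

import Mathlib

open MeasureTheory
open scoped ComplexOrder ENNReal

section Helpers
open Matrix
variable {n : Type*} [Fintype n] [DecidableEq n]

omit [DecidableEq n] in
lemma my_smul_psd {A : Matrix n n ℂ} (hA : A.PosSemidef) {t : ℝ} (ht : 0 ≤ t) :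
    ((t : ℂ) • A).PosSemidef := by
  refine posSemidef_iff_dotProduct_mulVec.mpr ⟨?_, fun x => ?_⟩
  · unfold Matrix.IsHermitian
    rw [conjTranspose_smul, hA.1.eq]
    simp [Complex.conj_ofReal]
  · rw [smul_mulVec, dotProduct_smul]
    exact smul_nonneg (by exact_mod_cast ht) (hA.dotProduct_mulVec_nonneg x)

omit [DecidableEq n] in
lemma my_smul_pd {A : Matrix n n ℂ} (hA : A.PosDef) {t : ℝ} (ht : 0 < t) :
    ((t : ℂ) • A).PosDef := by
  refine posDef_iff_dotProduct_mulVec.mpr ⟨?_, fun x hx => ?_⟩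
  · unfold Matrix.IsHermitian
    rw [conjTranspose_smul, hA.1.eq]
    simp [Complex.conj_ofReal]
  · rw [smul_mulVec, dotProduct_smul]
    exact smul_pos (by exact_mod_cast ht) (hA.dotProduct_mulVec_pos hx)

lemma my_det_one_add_smul {A : Matrix n n ℂ} (hA : A.IsHermitian) (t : ℝ) :
    ((1 : Matrix n n ℂ) + (t : ℂ) • A).det
      = ((∏ i, (1 + t * hA.eigenvalues i) : ℝ) : ℂ) := by
  have hU : (hA.eigenvectorUnitary : Matrix n n ℂ) * star (hA.eigenvectorUnitary : Matrix n n ℂ) = 1 :=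
    hA.eigenvectorUnitary.2.2
  have hU' : star (hA.eigenvectorUnitary : Matrix n n ℂ) * (hA.eigenvectorUnitary : Matrix n n ℂ) = 1 :=
    hA.eigenvectorUnitary.2.1
  have hd : (diagonal fun i => (1:ℂ) + t * hA.eigenvalues i)
      = 1 + (t : ℂ) • diagonal (RCLike.ofReal ∘ hA.eigenvalues) := by
    rw [← diagonal_smul, ← diagonal_one, ← diagonal_add]
    rfl
  have key : (1 : Matrix n n ℂ) + (t : ℂ) • A
      = (hA.eigenvectorUnitary : Matrix n n ℂ) * (diagonal fun i => (1:ℂ) + t * hA.eigenvalues i)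
        * star (hA.eigenvectorUnitary : Matrix n n ℂ) := by
    rw [hd, mul_add, add_mul, mul_one, hU, Matrix.mul_smul, Matrix.smul_mul]
    congr 2
    exact hA.spectral_theorem
  rw [key, det_mul, det_mul, mul_comm, ← mul_assoc, ← det_mul, hU', det_one, one_mul,
    det_diagonal]
  push_cast
  ring

lemma my_one_le_det_re {C : Matrix n n ℂ} (hC : C.PosSemidef) :
    1 ≤ ((1 : Matrix n n ℂ) + C).det.re := by
  have h1 : ((1 : Matrix n n ℂ) + C) = 1 + ((1 : ℝ) : ℂ) • C := by simp
  rw [h1, my_det_one_add_smul hC.1, Complex.ofReal_re]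
  calc (1:ℝ) = ∏ _i : n, (1:ℝ) := by simp
  _ ≤ _ := Finset.prod_le_prod (fun i _ => zero_le_one) (fun i _ => by
      have := hC.eigenvalues_nonneg i; linarith)

lemma my_det_add_psd {B C : Matrix n n ℂ} (hB : B.PosDef) (hC : C.PosSemidef) :
    B.det.re ≤ (B + C).det.re := by
  set S := (open scoped MatrixOrder in CFC.sqrt B) with hSdef
  have hS : S.PosSemidef := by open scoped MatrixOrder in exact (CFC.sqrt_nonneg B).posSemidef
  have hSS : S * S = B := by
    open scoped MatrixOrder in exact CFC.sqrt_mul_sqrt_self B hB.posSemidef.nonneg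
  have hdetS : IsUnit S.det := by
    have : S.det * S.det = B.det := by rw [← det_mul, hSS]
    have hB0 : B.det ≠ 0 := hB.det_pos.ne'
    exact isUnit_iff_ne_zero.mpr (fun h => hB0 (by rw [← this, h, zero_mul]))
  have hSi : S * S⁻¹ = 1 := mul_nonsing_inv S hdetS
  have hSi' : S⁻¹ * S = 1 := nonsing_inv_mul S hdetS
  have hCih : (S⁻¹)ᴴ = S⁻¹ := hS.inv.1
  have hC' : (S⁻¹ * C * S⁻¹).PosSemidef := by
    have := hC.conjTranspose_mul_mul_same (S⁻¹)
    rwa [hCih] at this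
  have key : B + C = S * (1 + S⁻¹ * C * S⁻¹) * S := by
    have h2 : S * (S⁻¹ * C * S⁻¹) * S = C := by
      calc S * (S⁻¹ * C * S⁻¹) * S = S * S⁻¹ * C * (S⁻¹ * S) := by
            simp only [Matrix.mul_assoc]
        _ = C := by rw [hSi, hSi', one_mul, mul_one]
    rw [mul_add, add_mul, mul_one, hSS, h2]
  have hBdet : B.det = ((B.det.re : ℝ) : ℂ) := by
    have := hB.det_pos
    rw [Complex.lt_def] at this
    exact Complex.ext rfl (by simpa using this.2.symm)
  have hDdet : ((1 : Matrix n n ℂ) + S⁻¹ * C * S⁻¹).det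
      = ((∏ i, (1 + 1 * hC'.1.eigenvalues i) : ℝ) : ℂ) := by
    have h1 : ((1 : Matrix n n ℂ) + S⁻¹ * C * S⁻¹) = 1 + ((1 : ℝ) : ℂ) • (S⁻¹ * C * S⁻¹) := by simp
    rw [h1, my_det_one_add_smul hC'.1]
  have hr : 1 ≤ ∏ i, (1 + 1 * hC'.1.eigenvalues i) := by
    calc (1:ℝ) = ∏ _i : n, (1:ℝ) := by simp
    _ ≤ _ := Finset.prod_le_prod (fun i _ => zero_le_one) (fun i _ => by
        have := hC'.eigenvalues_nonneg i; linarith)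
  have hdets : (B + C).det = B.det * ((∏ i, (1 + 1 * hC'.1.eigenvalues i) : ℝ) : ℂ) := by
    have hSdet2 : S.det * S.det = B.det := by rw [← det_mul, hSS]
    rw [key, det_mul, det_mul, hDdet]
    linear_combination ((∏ i, (1 + 1 * hC'.1.eigenvalues i) : ℝ) : ℂ) * hSdet2
  rw [hdets, hBdet]
  rw [← Complex.ofReal_mul, Complex.ofReal_re, Complex.ofReal_re]
  have h1 : 0 < B.det.re := (Complex.lt_def.mp hB.det_pos).1
  exact le_mul_of_one_le_right h1.le hr

end Helpers

/-- The set `Q_P` of complex positive semidefinite Hermitian `N_T × N_T` matrices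
with trace at most `P`. -/
def QPset (nT : ℕ) (P : ℝ) : Set (Matrix (Fin nT) (Fin nT) ℂ) :=
  {Q | Q.PosSemidef ∧ Q.trace.re ≤ P}

/-- `f(g, Q) = log₂ det(I + σ⁻² g Q gᴴ)`. -/
noncomputable def rateFn {nR nT : ℕ} (σ : ℝ) (g : Matrix (Fin nR) (Fin nT) ℂ)
    (Q : Matrix (Fin nT) (Fin nT) ℂ) : ℝ :=
  Real.logb 2 ((1 + ((σ : ℂ) ^ 2)⁻¹ • (g * Q * g.conjTranspose)).det.re)

open Matrix in
lemma rate_key {nR nT : ℕ} {σ : ℝ} (hσ : 0 < σ) (g : Matrix (Fin nR) (Fin nT) ℂ)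
    {Q₀ : Matrix (Fin nT) (Fin nT) ℂ} (hQ₀ : Q₀.PosSemidef) {t s : ℝ}
    (ht0 : 0 < t) (ht1 : t ≤ 1) (hs : 0 ≤ s) :
    rateFn σ g Q₀ + (nR : ℝ) * Real.logb 2 t ≤ rateFn σ g ((t:ℂ) • Q₀ + (s:ℂ) • 1) := by
  set u : ℝ := (σ ^ 2)⁻¹ with hu_def
  have hu : 0 < u := by positivity
  have hcoe : ((σ : ℂ) ^ 2)⁻¹ = ((u : ℝ) : ℂ) := by
    rw [hu_def]; push_cast; ring
  set M₀ : Matrix (Fin nR) (Fin nR) ℂ := g * Q₀ * g.conjTranspose with hM₀def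
  have hM₀ : M₀.PosSemidef := hQ₀.mul_mul_conjTranspose_same g
  have hgg : (g * g.conjTranspose).PosSemidef := Matrix.posSemidef_self_mul_conjTranspose g
  -- the perturbed matrix inside the determinant
  have hexp : (1 : Matrix (Fin nR) (Fin nR) ℂ)
        + ((σ : ℂ) ^ 2)⁻¹ • (g * ((t:ℂ) • Q₀ + (s:ℂ) • 1) * g.conjTranspose)
      = (1 + ((u * t : ℝ) : ℂ) • M₀) + ((u * s : ℝ) : ℂ) • (g * g.conjTranspose) := by
    rw [hcoe]
    rw [Matrix.mul_add, Matrix.add_mul, Matrix.mul_smul, Matrix.smul_mul, Matrix.mul_smul,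
      Matrix.smul_mul, Matrix.mul_one, smul_add, smul_smul, smul_smul, ← add_assoc]
    norm_cast
  have hB : ((1 : Matrix (Fin nR) (Fin nR) ℂ) + ((u * t : ℝ) : ℂ) • M₀).PosDef :=
    Matrix.PosDef.add_posSemidef Matrix.PosDef.one (my_smul_psd hM₀ (by positivity))
  have hC : (((u * s : ℝ) : ℂ) • (g * g.conjTranspose)).PosSemidef :=
    my_smul_psd hgg (by positivity)
  -- determinant values as real products
  have hdB : ((1 : Matrix (Fin nR) (Fin nR) ℂ) + ((u * t : ℝ) : ℂ) • M₀).det.re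
      = ∏ i, (1 + (u * t) * hM₀.1.eigenvalues i) := by
    rw [my_det_one_add_smul hM₀.1, Complex.ofReal_re]
  have hd0 : ((1 : Matrix (Fin nR) (Fin nR) ℂ) + ((u : ℝ) : ℂ) • M₀).det.re
      = ∏ i, (1 + u * hM₀.1.eigenvalues i) := by
    rw [my_det_one_add_smul hM₀.1, Complex.ofReal_re]
  set d0 : ℝ := ∏ i, (1 + u * hM₀.1.eigenvalues i) with hd0def
  have hd0_one : 1 ≤ d0 := by
    rw [hd0def]
    calc (1:ℝ) = ∏ _i : Fin nR, (1:ℝ) := by simp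
    _ ≤ _ := Finset.prod_le_prod (fun i _ => zero_le_one) (fun i _ => by
        have h1 := hM₀.eigenvalues_nonneg i
        nlinarith)
  -- product comparison
  have hprod : t ^ nR * d0 ≤ ∏ i, (1 + (u * t) * hM₀.1.eigenvalues i) := by
    have : t ^ nR * d0 = ∏ i, (t * (1 + u * hM₀.1.eigenvalues i)) := by
      rw [Finset.prod_mul_distrib, Finset.prod_const, hd0def]
      simp
    rw [this]
    refine Finset.prod_le_prod (fun i _ => ?_) (fun i _ => ?_)
    · have h1 := hM₀.eigenvalues_nonneg i
      positivity
    · have h1 := hM₀.eigenvalues_nonneg i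
      nlinarith
  -- now compare rateFn values
  have hmain : t ^ nR * d0
      ≤ ((1 : Matrix (Fin nR) (Fin nR) ℂ)
        + ((σ : ℂ) ^ 2)⁻¹ • (g * ((t:ℂ) • Q₀ + (s:ℂ) • 1) * g.conjTranspose)).det.re := by
    rw [hexp]
    calc t ^ nR * d0 ≤ ∏ i, (1 + (u * t) * hM₀.1.eigenvalues i) := hprod
    _ = ((1 : Matrix (Fin nR) (Fin nR) ℂ) + ((u * t : ℝ) : ℂ) • M₀).det.re := hdB.symm
    _ ≤ _ := my_det_add_psd hB hC
  have htd : 0 < t ^ nR * d0 := by positivity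
  unfold rateFn
  rw [hcoe]
  have hstep : Real.logb 2 (t ^ nR * d0)
      ≤ Real.logb 2 (((1 : Matrix (Fin nR) (Fin nR) ℂ)
        + ((u : ℝ) : ℂ) • (g * ((t:ℂ) • Q₀ + (s:ℂ) • 1) * g.conjTranspose)).det.re) := by
    apply Real.logb_le_logb_of_le one_lt_two htd
    rw [← hcoe]
    exact hmain
  refine le_trans ?_ hstep
  rw [Real.logb_mul (by positivity) (by positivity), Real.logb_pow]
  have : Real.logb 2 ((1 + ((u:ℝ):ℂ) • (g * Q₀ * g.conjTranspose)).det.re) = Real.logb 2 d0 := by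
    rw [← hM₀def, hd0]
  rw [this]
  linarith


/-- If `inf_{Q ∈ Q_P} ℙ[f(G,Q) < c - ε] < η`, then there are `μ' ∈ [1,2]` and a
positive definite (hence non-singular) `Q̂ ∈ Q_P` with `ℙ[f(G,Q̂) < c - μ'ε] ≤ η`. -/
theorem exists_posDef_Q_outage_le {Ω : Type*} [MeasurableSpace Ω] (μ : Measure Ω)
    [IsProbabilityMeasure μ]
    (nT nR : ℕ) (hnT : 1 ≤ nT) (hnR : 1 ≤ nR) (P σ : ℝ) (hP : 0 < P) (hσ : 0 < σ)
    (G : Ω → Fin nR → Fin nT → ℂ) (hG : Measurable G)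
    (η : ℝ) (hη : η ∈ Set.Ico (0 : ℝ) 1) (c ε : ℝ) (hε : 0 < ε)
    (hinf : (⨅ Q ∈ QPset nT P, μ {ω | rateFn σ (Matrix.of (G ω)) Q < c - ε})
      < ENNReal.ofReal η) :
    ∃ μ' : ℝ, 1 ≤ μ' ∧ μ' ≤ 2 ∧
      ∃ Qhat ∈ QPset nT P, Qhat.PosDef ∧
        μ {ω | rateFn σ (Matrix.of (G ω)) Qhat < c - μ' * ε} ≤ ENNReal.ofReal η := by
  simp only [iInf_lt_iff] at hinf
  obtain ⟨Q₀, hmem, hlt⟩ := hinf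
  obtain ⟨hQ₀psd, hQ₀tr⟩ := hmem
  have hnR' : (0:ℝ) < nR := by exact_mod_cast hnR
  have hnT' : (0:ℝ) < nT := by exact_mod_cast hnT
  set t : ℝ := (2:ℝ) ^ (-(ε / nR)) with htdef
  have ht0 : 0 < t := Real.rpow_pos_of_pos two_pos _
  have ht1 : t < 1 := Real.rpow_lt_one_of_one_lt_of_neg one_lt_two (by
    have : 0 < ε / nR := by positivity
    linarith)
  have hlogt : Real.logb 2 t = -(ε / nR) := Real.logb_rpow two_pos (by norm_num)
  have hlog : (nR : ℝ) * Real.logb 2 t = -ε := by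
    rw [hlogt]; field_simp
  set s : ℝ := (1 - t) * P / nT with hsdef
  have hs : 0 < s := by
    have : 0 < 1 - t := by linarith
    positivity
  set Qhat : Matrix (Fin nT) (Fin nT) ℂ := (t:ℂ) • Q₀ + (s:ℂ) • 1 with hQhatdef
  have hQhatpd : Qhat.PosDef :=
    Matrix.PosDef.posSemidef_add (my_smul_psd hQ₀psd ht0.le) (my_smul_pd Matrix.PosDef.one hs)
  have hQhattr : Qhat.trace.re ≤ P := by
    rw [hQhatdef, Matrix.trace_add, Matrix.trace_smul, Matrix.trace_smul, Matrix.trace_one]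
    have : ((t:ℂ) • Q₀.trace + (s:ℂ) • (Fintype.card (Fin nT) : ℂ)).re
        = t * Q₀.trace.re + s * nT := by
      simp [Complex.add_re, Complex.re_ofReal_mul, smul_eq_mul]
    rw [this]
    have hsnT : s * nT = (1 - t) * P := by
      rw [hsdef]; field_simp
    have : t * Q₀.trace.re ≤ t * P := by
      exact mul_le_mul_of_nonneg_left hQ₀tr ht0.le
    linarith
  refine ⟨2, by norm_num, le_rfl, Qhat, ⟨hQhatpd.posSemidef, hQhattr⟩, hQhatpd, ?_⟩
  have hsub : {ω | rateFn σ (Matrix.of (G ω)) Qhat < c - 2 * ε}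
      ⊆ {ω | rateFn σ (Matrix.of (G ω)) Q₀ < c - ε} := by
    intro ω hω
    simp only [Set.mem_setOf_eq] at hω ⊢
    have hk := rate_key hσ (Matrix.of (G ω)) hQ₀psd ht0 ht1.le hs.le
    rw [hlog] at hk
    linarith
  exact (measure_mono hsub).trans hlt.le
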